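/- Let d and d' be two multisets of n points in ℝ² whose multiset distance is 1 (they differ in exactly one point). Let S_d and S_{d'} be the multisets of C(n,2) pairwise slopes of d and d' respectively, computed with the Slope convention. Then the multiset distance between S_d and S_{d'} is at most n − 1. -/

import Mathlib

open MeasureTheory

/-- The multiset distance between two multisets: half the L1 distance between their
multiplicity functions, i.e. the number of records that must be changed to transform
one into the other (when they have equal size). -/
noncomputable def msDist {α : Type*} (d d' : Multiset α) : ℕ :=
  letI := Classical.decEq α
  ((d - d').card + (d' - d).card) / 2

/-- The Slope convention for an unordered pair of points, as used by the `Slope`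
subroutine: `(y'-y)/(x'-x)` if `x ≠ x'`; `sign(y'-y)·∞` if `x = x'` and the points differ
(under the canonical ordering of the unordered pair by increasing `y`, this sign is `+`);
and `0` if the two points are equal.  As a function of the unordered pair it is symmetric. -/
noncomputable def uslope (w w' : ℝ × ℝ) : EReal :=
  if w = w' then 0
  else if w.1 = w'.1 then ⊤
  else (((w'.2 - w.2) / (w'.1 - w.1) : ℝ) : EReal)

lemma uslope_symm (w w' : ℝ × ℝ) : uslope w w' = uslope w' w := by
  unfold uslope
  rcases eq_or_ne w w' with h | h
  · simp [h]
  · rw [if_neg h, if_neg (Ne.symm h)]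
    rcases eq_or_ne w.1 w'.1 with h1 | h1
    · simp [h1]
    · rw [if_neg h1, if_neg (Ne.symm h1)]
      norm_cast
      rw [div_eq_div_iff (by exact sub_ne_zero.mpr (Ne.symm h1)) (by exact sub_ne_zero.mpr h1)]
      ring

/-- The slope of an unordered pair of points. -/
noncomputable def slopeSym2 : Sym2 (ℝ × ℝ) → EReal :=
  Sym2.lift ⟨uslope, uslope_symm⟩

/-- The multiset of the `C(n,2)` pairwise slopes of a multiset `d` of `n` points in `ℝ²`,
computed with the Slope convention: we take all unordered pairs of two (distinct indices
of) elements of `d` and map each to its slope. -/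
noncomputable def slopesOf (d : Multiset (ℝ × ℝ)) : Multiset EReal :=
  letI := Classical.decEq (Sym2 (ℝ × ℝ))
  (d.sym2 - d.map (fun w => Sym2.mk w w)).map slopeSym2


section Aux
open Multiset

private lemma diag_le_sym2 {α : Type*} (c : Multiset α) :
    c.map (fun w => Sym2.mk w w) ≤ c.sym2 := by
  induction c using Multiset.induction_on with
  | empty => simp
  | cons a c ih =>
    rw [Multiset.map_cons, Multiset.sym2_cons, Multiset.map_cons, Multiset.cons_add]
    exact Multiset.cons_le_cons _ (ih.trans (Multiset.le_add_left _ _))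

private lemma offdiag_cons {α : Type*} [DecidableEq (Sym2 α)] (a : α) (c : Multiset α) :
    (a ::ₘ c).sym2 - (a ::ₘ c).map (fun w => Sym2.mk w w)
      = c.map (fun x => Sym2.mk a x) + (c.sym2 - c.map (fun w => Sym2.mk w w)) := by
  rw [Multiset.sym2_cons, Multiset.map_cons, Multiset.map_cons,
    ← Multiset.singleton_add, ← Multiset.singleton_add, add_assoc,
    add_tsub_add_eq_tsub_left, add_tsub_assoc_of_le (diag_le_sym2 c)]

private lemma map_sub_le {α β : Type*} [DecidableEq α] [DecidableEq β]
    (f : α → β) (s t : Multiset α) : s.map f - t.map f ≤ (s - t).map f := by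
  rw [tsub_le_iff_right, ← Multiset.map_add]
  exact Multiset.map_le_map le_tsub_add

private lemma exists_decomp {α : Type*} (d d' : Multiset α)
    (hc : Multiset.card d = Multiset.card d') (hnb : msDist d d' = 1) :
    ∃ a b c, d = a ::ₘ c ∧ d' = b ::ₘ c := by
  classical
  unfold msDist at hnb
  have hA : Multiset.card (d - d') + Multiset.card (d ∩ d') = Multiset.card d := by
    rw [← Multiset.card_add, Multiset.sub_add_inter]
  have hB : Multiset.card (d' - d) + Multiset.card (d' ∩ d) = Multiset.card d' := by
    rw [← Multiset.card_add, Multiset.sub_add_inter]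
  rw [Multiset.inter_comm] at hB
  have heq : Multiset.card (d - d') = Multiset.card (d' - d) := by omega
  have h1 : Multiset.card (d - d') = 1 := by
    omega
  have h2 : Multiset.card (d' - d) = 1 := heq ▸ h1
  obtain ⟨a, ha⟩ := Multiset.card_eq_one.mp h1
  obtain ⟨b, hb⟩ := Multiset.card_eq_one.mp h2
  have e1 := Multiset.sub_add_inter d d'
  rw [ha, Multiset.singleton_add] at e1
  have e2 := Multiset.sub_add_inter d' d
  rw [hb, Multiset.singleton_add, Multiset.inter_comm d' d] at e2
  exact ⟨a, b, d ∩ d', e1.symm, e2.symm⟩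

end Aux

/-- **Sensitivity of the Theil-Sen slope computation**: if two size-`n` multisets of points
have multiset distance `1`, then their multisets of `C(n,2)` pairwise slopes have
multiset distance at most `n - 1`. -/
theorem slopes_sensitivity (n : ℕ) (d d' : Multiset (ℝ × ℝ))
    (hd : Multiset.card d = n) (hd' : Multiset.card d' = n)
    (hnb : msDist d d' = 1) :
    msDist (slopesOf d) (slopesOf d') ≤ n - 1 := by
  letI : DecidableEq (Sym2 (ℝ × ℝ)) := Classical.decEq _
  letI : DecidableEq EReal := Classical.decEq _
  obtain ⟨a, b, c, rfl, rfl⟩ := exists_decomp d d' (hd.trans hd'.symm) hnb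
  have hcard : Multiset.card c = n - 1 := by
    rw [Multiset.card_cons] at hd; omega
  set Q : Multiset (Sym2 (ℝ × ℝ)) := c.sym2 - c.map (fun w => Sym2.mk w w) with hQ
  have key : ∀ x y : ℝ × ℝ,
      slopesOf (x ::ₘ c) - slopesOf (y ::ₘ c)
        ≤ (c.map (fun z => Sym2.mk x z) - c.map (fun z => Sym2.mk y z)).map slopeSym2 := by
    intro x y
    have h1 : slopesOf (x ::ₘ c)
        = (c.map (fun z => Sym2.mk x z)).map slopeSym2 + Q.map slopeSym2 := by
      unfold slopesOf
      rw [offdiag_cons, Multiset.map_add]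
    have h2 : slopesOf (y ::ₘ c)
        = (c.map (fun z => Sym2.mk y z)).map slopeSym2 + Q.map slopeSym2 := by
      unfold slopesOf
      rw [offdiag_cons, Multiset.map_add]
    rw [h1, h2, add_tsub_add_eq_tsub_right]
    exact map_sub_le _ _ _
  have hb1 : Multiset.card (slopesOf (a ::ₘ c) - slopesOf (b ::ₘ c)) ≤ n - 1 := by
    calc Multiset.card (slopesOf (a ::ₘ c) - slopesOf (b ::ₘ c))
        ≤ Multiset.card ((c.map (fun z => Sym2.mk a z)
            - c.map (fun z => Sym2.mk b z)).map slopeSym2) :=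
          Multiset.card_le_card (key a b)
      _ ≤ n - 1 := by
          rw [Multiset.card_map]
          exact le_trans (Multiset.card_le_card (Multiset.sub_le_self _ _))
            (by rw [Multiset.card_map, hcard])
  have hb2 : Multiset.card (slopesOf (b ::ₘ c) - slopesOf (a ::ₘ c)) ≤ n - 1 := by
    calc Multiset.card (slopesOf (b ::ₘ c) - slopesOf (a ::ₘ c))
        ≤ Multiset.card ((c.map (fun z => Sym2.mk b z)
            - c.map (fun z => Sym2.mk a z)).map slopeSym2) :=
          Multiset.card_le_card (key b a)
      _ ≤ n - 1 := by
          rw [Multiset.card_map]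
          exact le_trans (Multiset.card_le_card (Multiset.sub_le_self _ _))
            (by rw [Multiset.card_map, hcard])
  unfold msDist
  omega
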